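/- (Recovery of the continuous solution from the adaptive iterates.) Suppose ‖l̄‖ < c²/(4‖T‖³‖A₁‖) and additionally that l̄ = T* ℓ for some ℓ ∈ V; let ū ∈ (ker T)⊥ satisfy G ū + G₁(ū) = l̄. Then u := T ū ∈ V satisfies B u + A₁(u,u) = ℓ, i.e. u solves the original variational fixed point problem. Moreover, for every v ∈ H one has ‖u − T v‖ ≤ ‖T‖·‖P(ū − v)‖; consequently, for any sequence (v_n) in H with P v_n → ū in H (as produced by the routine FIXPT), the functions T v_n = Σ_λ (D_V⁻¹ v_n)_λ f_λ converge to u in V. -/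

import Mathlib

open scoped RealInnerProductSpace
open Filter Topology

/-- Recovery of the continuous solution from the adaptive iterates: if
`ū ∈ Ran G = (ker T)ᗮ` solves the discrete nonlinear problem `G ū + G₁(ū) = T* ℓ`,
then `u = T ū` solves `B u + A₁(u,u) = ℓ`, one has
`‖u − T v‖ ≤ ‖T‖ ‖P(ū − v)‖` for all `v`, and `T v_n → u` in `V` whenever
`P v_n → ū` in `H`. -/
theorem recovery_of_continuous_solution_from_fixpt
    {V H : Type*} [NormedAddCommGroup V] [InnerProductSpace ℝ V] [CompleteSpace V]
    [NormedAddCommGroup H] [InnerProductSpace ℝ H] [CompleteSpace H]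
    (B : V →L[ℝ] V) (α : ℝ) (hα : 0 < α)
    (hB : ∀ v : V, α * ‖v‖ ^ 2 ≤ ⟪B v, v⟫)
    (T : H →L[ℝ] V) (hT : Function.Surjective T)
    (G : H →L[ℝ] H) (hG : G = (ContinuousLinearMap.adjoint T).comp (B.comp T))
    (P : H →L[ℝ] H)
    (hP : ∀ x : H, P x ∈ (LinearMap.ker (T : H →ₗ[ℝ] V))ᗮ ∧ x - P x ∈ LinearMap.ker (T : H →ₗ[ℝ] V))
    (c : ℝ) (hc : 0 < c) (hcG : ∀ x ∈ (LinearMap.ker (T : H →ₗ[ℝ] V))ᗮ, c * ‖x‖ ≤ ‖G x‖)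
    (A₁ : V →L[ℝ] V →L[ℝ] V) (hA₁ : ‖A₁‖ ≠ 0)
    (G₁ : H → H) (hG₁ : ∀ x : H, G₁ x = ContinuousLinearMap.adjoint T (A₁ (T x) (T x)))
    (lbar : H) (hl : ‖lbar‖ < c ^ 2 / (4 * ‖T‖ ^ 3 * ‖A₁‖))
    (ℓ : V) (hℓ : ContinuousLinearMap.adjoint T ℓ = lbar)
    (ubar : H) (hubarmem : ubar ∈ (LinearMap.ker (T : H →ₗ[ℝ] V))ᗮ)
    (hubar : G ubar + G₁ ubar = lbar) :
    B (T ubar) + A₁ (T ubar) (T ubar) = ℓ ∧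
    (∀ v : H, ‖T ubar - T v‖ ≤ ‖T‖ * ‖P (ubar - v)‖) ∧
    (∀ vseq : ℕ → H, Tendsto (fun n : ℕ => P (vseq n)) atTop (𝓝 ubar) →
      Tendsto (fun n : ℕ => T (vseq n)) atTop (𝓝 (T ubar))) := by
  have hadj : ∀ w : V, ContinuousLinearMap.adjoint T w = 0 → w = 0 := by
    intro w hw
    obtain ⟨x, hx⟩ := hT w
    have h0 : (⟪w, T x⟫ : ℝ) = 0 := by
      rw [← ContinuousLinearMap.adjoint_inner_left, hw, inner_zero_left]
    rw [hx] at h0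
    exact inner_self_eq_zero.mp h0
  have hTP : ∀ x : H, T (P x) = T x := by
    intro x
    have hk : T (x - P x) = 0 := (hP x).2
    rw [map_sub, sub_eq_zero] at hk
    exact hk.symm
  refine ⟨?_, ?_, ?_⟩
  · have key : ContinuousLinearMap.adjoint T (B (T ubar) + A₁ (T ubar) (T ubar) - ℓ) = 0 := by
      rw [map_sub, map_add, hℓ]
      rw [hG, hG₁] at hubar
      simp only [ContinuousLinearMap.comp_apply] at hubar
      rw [hubar, sub_self]
    have h := hadj _ key
    rwa [sub_eq_zero] at h
  · intro v
    have : T ubar - T v = T (P (ubar - v)) := by rw [hTP, map_sub]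
    rw [this]
    exact T.le_opNorm _
  · intro vseq hconv
    have := (T.continuous.tendsto ubar).comp hconv
    exact this.congr fun n => hTP (vseq n)
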